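/- Let α ∈ L be a unit, and consider the k-linear maps w, w' : L → L* = Hom_k(L, k) defined by w(x) := (y ↦ θ*_{n−1}(α·x·y)) and w'(x) := (y ↦ θ*_{n−1}(α·θ·x·y)). Then w is bijective and the composite w^{−1}∘w' : L → L equals multiplication by θ. -/

import Mathlib

/-- Nondegeneracy of the pairing `(z, y) ↦ coeffTop (z * y)`. -/
theorem nondegen_aux_stmt16 (k : Type*) [Field k] (f : Polynomial k) (hf : f.Monic)
    (hn : 1 ≤ f.natDegree)
    (coeffTop : AdjoinRoot f →ₗ[k] k)
    (hct1 : coeffTop (AdjoinRoot.root f ^ (f.natDegree - 1)) = 1)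
    (hct0 : ∀ i : ℕ, i < f.natDegree - 1 → coeffTop (AdjoinRoot.root f ^ i) = 0)
    (z : AdjoinRoot f) (hz : ∀ y, coeffTop (z * y) = 0) : z = 0 := by
  by_contra hz0
  let b : Module.Basis (Fin f.natDegree) k (AdjoinRoot f) := (AdjoinRoot.powerBasis' hf).basis
  have hb : ∀ i : Fin f.natDegree, b i = AdjoinRoot.root f ^ (i : ℕ) := fun i =>
    (AdjoinRoot.powerBasis' hf).basis_eq_pow i
  set c := b.repr z with hc
  have hsupp : c.support.Nonempty := by
    rw [Finsupp.support_nonempty_iff]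
    intro h
    exact hz0 (b.repr.injective (by rw [← hc, h, map_zero]))
  set j := c.support.max' hsupp with hj
  have hjmem : j ∈ c.support := c.support.max'_mem hsupp
  have hzsum : z = ∑ i : Fin f.natDegree, c i • b i := (b.sum_repr z).symm
  have key : coeffTop (z * AdjoinRoot.root f ^ (f.natDegree - 1 - (j : ℕ))) = c j := by
    rw [hzsum, Finset.sum_mul, map_sum, Finset.sum_eq_single j]
    · rw [hb, smul_mul_assoc, map_smul, ← pow_add,
        Nat.add_sub_cancel' (by omega : (j : ℕ) ≤ f.natDegree - 1), hct1, smul_eq_mul, mul_one]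
    · intro i _ hij
      by_cases hci : c i = 0
      · simp [hci]
      · have hi' : (i : ℕ) < (j : ℕ) :=
          lt_of_le_of_ne (c.support.le_max' i (Finsupp.mem_support_iff.mpr hci))
            (fun h => hij (Fin.ext h))
        rw [hb, smul_mul_assoc, map_smul, ← pow_add, hct0 _ (by omega), smul_eq_mul, mul_zero]
    · intro h; exact absurd (Finset.mem_univ j) h
  rw [hz] at key
  exact (Finsupp.mem_support_iff.mp hjmem) key.symm

/-- Let `L = k[t]/(f)` with `f` monic separable of degree `n ≥ 1`, `θ` the
image of `t`, and `α ∈ L` a unit. Let `w, w' : L → L*` be the `k`-linear maps given by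
`w x = θ*_{n-1}(α x ·)` and `w' x = θ*_{n-1}(α θ x ·)`. Then `w` is bijective and
`w⁻¹ ∘ w'` is multiplication by `θ`. -/
theorem stmt_16 (k : Type*) [Field k] (f : Polynomial k) (hf : f.Monic)
    (hsep : f.Separable) (hn : 1 ≤ f.natDegree)
    (coeffTop : AdjoinRoot f →ₗ[k] k)
    (hct1 : coeffTop (AdjoinRoot.root f ^ (f.natDegree - 1)) = 1)
    (hct0 : ∀ i : ℕ, i < f.natDegree - 1 → coeffTop (AdjoinRoot.root f ^ i) = 0)
    (α : AdjoinRoot f) (hα : IsUnit α)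
    (w w' : AdjoinRoot f →ₗ[k] Module.Dual k (AdjoinRoot f))
    (hw : ∀ x y : AdjoinRoot f, w x y = coeffTop (α * x * y))
    (hw' : ∀ x y : AdjoinRoot f, w' x y = coeffTop (α * AdjoinRoot.root f * x * y)) :
    Function.Bijective w ∧
      ∀ x : AdjoinRoot f, Function.invFun w (w' x) = AdjoinRoot.root f * x := by
  have hFD : FiniteDimensional k (AdjoinRoot f) :=
    Module.Finite.of_basis (AdjoinRoot.powerBasisAux' hf)
  have hinj : Function.Injective w := by
    rw [injective_iff_map_eq_zero]
    intro x hx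
    have hax : α * x = 0 := by
      apply nondegen_aux_stmt16 k f hf hn coeffTop hct1 hct0
      intro y
      rw [← hw x y, hx]
      rfl
    rcases hα with ⟨u, rfl⟩
    simpa using congrArg (fun t => (↑u⁻¹ : AdjoinRoot f) * t) hax
  have hbij : Function.Bijective w :=
    ⟨hinj, (LinearMap.injective_iff_surjective_of_finrank_eq_finrank
      (Subspace.dual_finrank_eq).symm).mp hinj⟩
  refine ⟨hbij, fun x => ?_⟩
  have hww : w' x = w (AdjoinRoot.root f * x) :=
    LinearMap.ext fun y => by rw [hw, hw']; ring_nf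
  rw [hww]
  exact Function.leftInverse_invFun hinj _
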